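/- Let n ≥ 2, let m be a positive integer, let A be an m × n real matrix and b ∈ ℝ^m, and let P = {x ∈ ℝ^n : A x ≤ b} (componentwise inequality). Then the image of P under the projection π : ℝ^n → ℝ^{n-1} that deletes the first coordinate is a polyhedron in ℝ^{n-1}; that is, there exist a positive integer m' , an m' × (n-1) real matrix A' and a vector b' ∈ ℝ^{m'} such that π(P) = {x' ∈ ℝ^{n-1} : A' x' ≤ b'}. -/
import Mathlib

/-- The projection of a polyhedron in ℝ^{n+1} (with n+1 ≥ 2) onto ℝ^n obtained by
deleting the first coordinate is again a polyhedron. -/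
theorem projection_of_polyhedron_is_polyhedron
    (n m : ℕ) (hn : 1 ≤ n) (hm : 0 < m)
    (A : Matrix (Fin m) (Fin (n + 1)) ℝ) (b : Fin m → ℝ) :
    ∃ (m' : ℕ) (_ : 0 < m') (A' : Matrix (Fin m') (Fin n) ℝ) (b' : Fin m' → ℝ),
      (fun x : Fin (n + 1) → ℝ => x ∘ Fin.succ) '' {x | A.mulVec x ≤ b}
        = {x' : Fin n → ℝ | A'.mulVec x' ≤ b'} := by
  classical
  set a : Fin m → ℝ := fun i => A i 0 with ha
  set r : Fin m → (Fin n → ℝ) := fun i k => A i k.succ with hr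
  set row : Fin m × Fin m → (Fin n → ℝ) := fun p =>
    if 0 < a p.1 ∧ a p.2 < 0 then a p.1 • r p.2 + (-a p.2) • r p.1
    else if p.1 = p.2 ∧ a p.1 = 0 then r p.1 else 0 with hrow
  set rhs : Fin m × Fin m → ℝ := fun p =>
    if 0 < a p.1 ∧ a p.2 < 0 then a p.1 * b p.2 + (-a p.2) * b p.1
    else if p.1 = p.2 ∧ a p.1 = 0 then b p.1 else 0 with hrhs
  refine ⟨m * m, Nat.mul_pos hm hm, fun q => row (finProdFinEquiv.symm q),
    fun q => rhs (finProdFinEquiv.symm q), ?_⟩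
  have hmv : ∀ (x : Fin (n+1) → ℝ) (i : Fin m),
      A.mulVec x i = a i * x 0 + dotProduct (r i) (x ∘ Fin.succ) := by
    intro x i
    simp [Matrix.mulVec, dotProduct, Fin.sum_univ_succ, ha, hr, Function.comp]
  have hmv' : ∀ (x' : Fin n → ℝ) (q : Fin (m*m)),
      Matrix.mulVec (fun q => row (finProdFinEquiv.symm q)) x' q
        = dotProduct (row (finProdFinEquiv.symm q)) x' := by
    intro x' q; rfl
  ext x'
  simp only [Set.mem_image, Set.mem_setOf_eq, Pi.le_def]
  constructor
  · rintro ⟨x, hx, rfl⟩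
    intro q
    rw [hmv']
    set p := finProdFinEquiv.symm q with hp
    have e1 := hx p.1
    have e2 := hx p.2
    rw [hmv] at e1 e2
    simp only [hrow, hrhs]
    split_ifs with h1 h2
    · rw [add_dotProduct, smul_dotProduct, smul_dotProduct]
      simp only [smul_eq_mul]
      nlinarith [h1.1, h1.2, e1, e2]
    · rw [h2.2] at e1
      rw [zero_mul, zero_add] at e1
      exact e1
    · rw [zero_dotProduct]
  · intro h
    set c : Fin m → ℝ := fun i => dotProduct (r i) x' with hc
    have key : ∀ p : Fin m × Fin m, dotProduct (row p) x' ≤ rhs p := by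
      intro p
      have := h (finProdFinEquiv p)
      rwa [hmv', Equiv.symm_apply_apply] at this
    have hz : ∀ i, a i = 0 → c i ≤ b i := by
      intro i hi
      have hkey := key (i, i)
      simp only [hrow, hrhs] at hkey
      split_ifs at hkey with hc1 hc2
      · exact absurd hc1.1 (by simp [hi])
      · exact hkey
      · exact absurd (by simp [hi]) hc2
    have hpn : ∀ i j, 0 < a i → a j < 0 →
        a i * c j + (-a j) * c i ≤ a i * b j + (-a j) * b i := by
      intro i j hi hj
      have hkey := key (i, j)
      simp only [hrow, hrhs] at hkey
      split_ifs at hkey with hc1 hc2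
      · rw [add_dotProduct, smul_dotProduct, smul_dotProduct] at hkey
        simpa [smul_eq_mul, hc] using hkey
      · exact absurd ⟨hi, hj⟩ hc1
      · exact absurd ⟨hi, hj⟩ hc1
    have main : ∃ t : ℝ, ∀ i, a i * t + c i ≤ b i := by
      by_cases hN : (Finset.univ.filter fun j => a j < 0).Nonempty
      · refine ⟨(Finset.univ.filter fun j => a j < 0).sup' hN fun j => (b j - c j)/(a j), ?_⟩
        intro i
        set t := (Finset.univ.filter fun j => a j < 0).sup' hN fun j => (b j - c j)/(a j) with ht
        rcases lt_trichotomy (a i) 0 with h0 | h0 | h0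
        · have hmem : i ∈ Finset.univ.filter fun j => a j < 0 :=
            Finset.mem_filter.mpr ⟨Finset.mem_univ i, h0⟩
          have hle : (b i - c i)/(a i) ≤ t := by rw [ht]; exact Finset.le_sup' (fun j => (b j - c j)/(a j)) hmem
          have hne : a i ≠ 0 := ne_of_lt h0
          have hcanc : a i * ((b i - c i)/(a i)) = b i - c i := by field_simp
          nlinarith [mul_le_mul_of_nonpos_left hle (le_of_lt h0)]
        · rw [h0, zero_mul, zero_add]
          exact hz i h0
        · have hub : t ≤ (b i - c i)/(a i) := by
            rw [ht]
            apply Finset.sup'_le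
            intro j hj
            simp only [Finset.mem_filter, Finset.mem_univ, true_and] at hj
            have hnei : a i ≠ 0 := ne_of_gt h0
            have hnej : a j ≠ 0 := ne_of_lt hj
            have hci : a i * ((b i - c i)/(a i)) = b i - c i := by field_simp
            have hcj : a j * ((b j - c j)/(a j)) = b j - c j := by field_simp
            have hineq := hpn i j h0 hj
            nlinarith [mul_neg_of_pos_of_neg h0 hj, hci, hcj]
          have hne : a i ≠ 0 := ne_of_gt h0
          have hcanc : a i * ((b i - c i)/(a i)) = b i - c i := by field_simp
          nlinarith [mul_le_mul_of_nonneg_left hub (le_of_lt h0)]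
      · have hge : ∀ j, 0 ≤ a j := by
          intro j
          by_contra hcon
          push_neg at hcon
          exact hN ⟨j, by simp [hcon]⟩
        by_cases hP : (Finset.univ.filter fun i => 0 < a i).Nonempty
        · refine ⟨(Finset.univ.filter fun i => 0 < a i).inf' hP fun i => (b i - c i)/(a i), ?_⟩
          intro i
          set t := (Finset.univ.filter fun i => 0 < a i).inf' hP fun i => (b i - c i)/(a i) with ht
          rcases eq_or_lt_of_le (hge i) with h0 | h0
          · rw [← h0, zero_mul, zero_add]
            exact hz i h0.symm
          · have hmem : i ∈ Finset.univ.filter fun i => 0 < a i :=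
              Finset.mem_filter.mpr ⟨Finset.mem_univ i, h0⟩
            have hub : t ≤ (b i - c i)/(a i) := by rw [ht]; exact Finset.inf'_le (fun i => (b i - c i)/(a i)) hmem
            have hne : a i ≠ 0 := ne_of_gt h0
            have hcanc : a i * ((b i - c i)/(a i)) = b i - c i := by field_simp
            nlinarith [mul_le_mul_of_nonneg_left hub (le_of_lt h0)]
        · refine ⟨0, ?_⟩
          intro i
          have h0 : a i = 0 := by
            by_contra hcon
            exact hP ⟨i, by simp [lt_of_le_of_ne (hge i) (Ne.symm hcon)]⟩
          rw [h0, zero_mul, zero_add]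
          exact hz i h0
    obtain ⟨t, ht⟩ := main
    refine ⟨Fin.cons t x', ?_, ?_⟩
    · intro i
      rw [hmv]
      have hcomp : (Fin.cons t x' : Fin (n+1) → ℝ) ∘ Fin.succ = x' := by
        funext k; simp
      rw [hcomp]
      simpa [Fin.cons_zero] using ht i
    · funext k; simp
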